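/- The first moment of the fractional Poisson measure π_{λ,β} is λ/Γ(β+1), and the second moment is λ/Γ(β+1) + 2λ²/Γ(2β+1). -/

import Mathlib

/-- The Mittag-Leffler function `E_β(z) = ∑ zⁿ / Γ(βn+1)`. -/
noncomputable def mittagLeffler (β : ℝ) (z : ℂ) : ℂ :=
  ∑' n : ℕ, z ^ n / Complex.Gamma ((β * n + 1 : ℝ) : ℂ)

open Filter Real FormalMultilinearSeries

lemma gamma_ratio_ge {β : ℝ} (hβ : 0 < β) {x : ℝ} (hx : 2 ≤ x) :
    Real.Gamma x * (x - 1) ^ β ≤ Real.Gamma (x + β) := by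
  have hx1 : (0:ℝ) < x - 1 := by linarith
  have hx0 : (0:ℝ) < x := by linarith
  have hxβ : (0:ℝ) < x + β := by linarith
  have hslope := Real.convexOn_log_Gamma.slope_mono_adjacent
    (Set.mem_Ioi.mpr hx1) (Set.mem_Ioi.mpr hxβ)
    (show x - 1 < x by linarith) (show x < x + β by linarith)
  have hG : Real.Gamma x = (x - 1) * Real.Gamma (x - 1) := by
    have := Real.Gamma_add_one (ne_of_gt hx1)
    rw [sub_add_cancel] at this
    exact this
  have hGpos : 0 < Real.Gamma x := Real.Gamma_pos_of_pos hx0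
  have hGpos1 : 0 < Real.Gamma (x - 1) := Real.Gamma_pos_of_pos hx1
  have hGposβ : 0 < Real.Gamma (x + β) := Real.Gamma_pos_of_pos hxβ
  simp only [Function.comp_apply] at hslope
  have h1 : (Real.log (Real.Gamma x) - Real.log (Real.Gamma (x-1))) / (x - (x-1))
      = Real.log (x - 1) := by
    rw [hG, Real.log_mul (ne_of_gt hx1) (ne_of_gt hGpos1)]
    field_simp
    ring
  rw [h1] at hslope
  have h2 : Real.log (x-1) * β ≤ Real.log (Real.Gamma (x+β)) - Real.log (Real.Gamma x) := by
    have hβ' : x + β - x = β := by ring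
    rw [hβ'] at hslope
    calc Real.log (x-1) * β ≤ ((Real.log (Real.Gamma (x+β)) - Real.log (Real.Gamma x)) / β) * β := by
          exact mul_le_mul_of_nonneg_right hslope hβ.le
      _ = _ := by field_simp
  have key : Real.log (Real.Gamma x * (x-1)^β) ≤ Real.log (Real.Gamma (x+β)) := by
    rw [Real.log_mul (ne_of_gt hGpos) (by positivity), Real.log_rpow hx1]
    linarith
  calc Real.Gamma x * (x-1)^β
      = Real.exp (Real.log (Real.Gamma x * (x-1)^β)) := by
        rw [Real.exp_log (by positivity)]
    _ ≤ Real.exp (Real.log (Real.Gamma (x+β))) := Real.exp_le_exp.mpr key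
    _ = Real.Gamma (x+β) := Real.exp_log hGposβ

/-- Master summability: `∑ (n+1)^d r^n / Γ(βn+1) < ∞`. -/
lemma master_summable {β : ℝ} (hβ : 0 < β) (d : ℕ) {r : ℝ} (hr : 0 ≤ r) :
    Summable (fun n : ℕ => ((n : ℝ) + 1) ^ d * r ^ n / Real.Gamma (β * n + 1)) := by
  apply summable_of_ratio_norm_eventually_le (r := 1/2) (by norm_num)
  have h1 : Tendsto (fun n : ℕ => (β * n) ^ β) atTop atTop :=
    (tendsto_rpow_atTop hβ).comp
      (tendsto_natCast_atTop_atTop.const_mul_atTop hβ)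
  filter_upwards [h1.eventually_ge_atTop (2 ^ (d+1) * r),
    tendsto_natCast_atTop_atTop.eventually_ge_atTop (1/β), eventually_ge_atTop 1] with n hn hn2 hn3
  have hβn1 : (2:ℝ) ≤ β * n + 1 := by
    have : (1:ℝ) ≤ β * n := by
      rw [div_le_iff₀ hβ] at hn2; linarith [mul_comm β (n:ℝ)]
    linarith
  have hpos : 0 < Real.Gamma (β * n + 1) := Real.Gamma_pos_of_pos (by linarith)
  have hpos' : 0 < Real.Gamma (β * (n+1) + 1) := Real.Gamma_pos_of_pos (by positivity)
  have hrat : Real.Gamma (β * n + 1) * (β * n) ^ β ≤ Real.Gamma (β * (n+1) + 1) := by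
    have := gamma_ratio_ge hβ hβn1
    have he : β * n + 1 + β = β * (n+1) + 1 := by push_cast; ring
    rw [he] at this
    simpa using this
  rw [Real.norm_eq_abs, Real.norm_eq_abs, abs_of_nonneg (by positivity),
    abs_of_nonneg (by positivity)]
  push_cast
  have heq : (1/2:ℝ) * (((n:ℝ) + 1) ^ d * r ^ n / Real.Gamma (β * n + 1))
      = (((n:ℝ)+1)^d * r^n) / (2 * Real.Gamma (β * n + 1)) := by ring
  rw [heq, div_le_div_iff₀ (by positivity) (by positivity)]
  have hb : ((n:ℝ) + 1 + 1) ^ d ≤ 2^d * ((n:ℝ)+1)^d := by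
    rw [← mul_pow]
    apply pow_le_pow_left₀ (by positivity)
    have : (1:ℝ) ≤ (n:ℝ) := by exact_mod_cast hn3
    linarith
  calc ((n:ℝ) + 1 + 1) ^ d * r ^ (n+1) * (2 * Real.Gamma (β * n + 1))
      ≤ (2^d * ((n:ℝ)+1)^d) * r ^ (n+1) * (2 * Real.Gamma (β * n + 1)) := by
        gcongr
    _ = ((n:ℝ)+1)^d * r^n * (Real.Gamma (β * n + 1) * (2^(d+1) * r)) := by
        rw [pow_succ r, pow_succ (2:ℝ)]; ring
    _ ≤ ((n:ℝ)+1)^d * r^n * (Real.Gamma (β * n + 1) * (β * n) ^ β) := by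
        gcongr
    _ ≤ ((n:ℝ)+1)^d * r^n * Real.Gamma (β * ((n:ℝ)+1) + 1) := by
        gcongr



noncomputable def mlCoeff (β : ℝ) (k n : ℕ) : ℂ :=
  (((n + k).factorial : ℂ) / (n.factorial : ℂ)) * (Complex.Gamma ((β * (n + k) + 1 : ℝ) : ℂ))⁻¹

noncomputable def mlSeries (β : ℝ) (k : ℕ) : FormalMultilinearSeries ℂ ℂ ℂ :=
  FormalMultilinearSeries.ofScalars ℂ (mlCoeff β k)

noncomputable def mlDeriv (β : ℝ) (k : ℕ) (z : ℂ) : ℂ := ∑' n : ℕ, mlCoeff β k n * z ^ n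

lemma fact_ratio_le (n k : ℕ) : (n + k).factorial ≤ n.factorial * (n + k) ^ k := by
  induction k with
  | zero => simp
  | succ k ih =>
    have h1 : (n + (k+1)).factorial = (n + k + 1) * (n + k).factorial := by
      rw [← Nat.add_assoc, Nat.factorial_succ]
    rw [h1]
    calc (n + k + 1) * (n + k).factorial ≤ (n + k + 1) * (n.factorial * (n + k) ^ k) := by
          exact Nat.mul_le_mul_left _ ih
      _ ≤ (n + k + 1) * (n.factorial * (n + k + 1) ^ k) := by
          apply Nat.mul_le_mul_left
          apply Nat.mul_le_mul_left
          exact Nat.pow_le_pow_left (Nat.le_succ _) _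
      _ = n.factorial * (n + (k+1)) ^ (k+1) := by ring_nf

lemma norm_mlCoeff {β : ℝ} (hβ : 0 < β) (k n : ℕ) :
    ‖mlCoeff β k n‖ = (((n + k).factorial : ℝ) / (n.factorial : ℝ)) *
      (Real.Gamma (β * (n + k) + 1))⁻¹ := by
  rw [mlCoeff, Complex.Gamma_ofReal, norm_mul, norm_div, norm_inv]
  push_cast
  rw [Complex.norm_natCast, Complex.norm_natCast, Complex.norm_real, Real.norm_eq_abs,
    abs_of_pos (Real.Gamma_pos_of_pos (by positivity))]

lemma summable_mlCoeff {β : ℝ} (hβ : 0 < β) (k : ℕ) (r : NNReal) :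
    Summable fun n : ℕ => ‖mlCoeff β k n‖ * (r : ℝ) ^ n := by
  set s : ℝ := max (r : ℝ) 1 with hs
  have hs1 : (1:ℝ) ≤ s := le_max_right _ _
  have hs0 : (0:ℝ) ≤ s := by linarith
  have hmaster := master_summable hβ k (le_of_lt (lt_of_lt_of_le one_pos hs1))
  have hsum : Summable (fun n : ℕ =>
      (((n + k : ℕ) : ℝ) + 1) ^ k * s ^ (n + k) / Real.Gamma (β * ((n + k : ℕ) : ℝ) + 1)) := by
    exact (summable_nat_add_iff k).mpr hmaster
  apply Summable.of_nonneg_of_le (fun n => by positivity) _ hsum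
  intro n
  rw [norm_mlCoeff hβ]
  have hΓ : 0 < Real.Gamma (β * ((n:ℝ) + (k:ℝ)) + 1) := Real.Gamma_pos_of_pos
    (by have := mul_nonneg hβ.le (by positivity : (0:ℝ) ≤ (n:ℝ) + (k:ℝ)); linarith)
  have hΓi : (0:ℝ) ≤ (Real.Gamma (β * ((n:ℝ) + (k:ℝ)) + 1))⁻¹ := inv_nonneg.mpr hΓ.le
  have h1 : ((n + k).factorial : ℝ) / (n.factorial : ℝ) ≤ ((n:ℝ) + (k:ℝ) + 1) ^ k := by
    rw [div_le_iff₀ (by positivity)]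
    calc ((n + k).factorial : ℝ) ≤ ((n.factorial * (n + k) ^ k : ℕ) : ℝ) := by
          exact_mod_cast fact_ratio_le n k
      _ = (n.factorial : ℝ) * ((n:ℝ) + (k:ℝ)) ^ k := by push_cast; ring
      _ ≤ (n.factorial : ℝ) * ((n:ℝ) + (k:ℝ) + 1) ^ k :=
          mul_le_mul_of_nonneg_left (pow_le_pow_left₀ (by positivity) (by linarith) k)
            (by positivity)
      _ = ((n:ℝ) + (k:ℝ) + 1) ^ k * (n.factorial : ℝ) := mul_comm _ _
  have h2 : (r:ℝ) ^ n ≤ s ^ (n + k) := by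
    calc (r:ℝ) ^ n ≤ s ^ n := by gcongr; exact le_max_left _ _
      _ ≤ s ^ (n + k) := pow_le_pow_right₀ hs1 (Nat.le_add_right _ _)
  have goal : ((n + k).factorial : ℝ) / (n.factorial : ℝ) * (Real.Gamma (β * ((n:ℝ)+(k:ℝ)) + 1))⁻¹
        * (r:ℝ) ^ n
      ≤ (((n:ℝ) + (k:ℝ)) + 1) ^ k * s ^ (n+k) / Real.Gamma (β * ((n:ℝ)+(k:ℝ)) + 1) := by
    calc ((n + k).factorial : ℝ) / (n.factorial : ℝ) * (Real.Gamma (β * ((n:ℝ)+(k:ℝ)) + 1))⁻¹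
          * (r:ℝ) ^ n
        ≤ ((((n:ℝ) + (k:ℝ)) + 1) ^ k * (Real.Gamma (β * ((n:ℝ)+(k:ℝ)) + 1))⁻¹) * s ^ (n+k) :=
          mul_le_mul (mul_le_mul_of_nonneg_right h1 hΓi) h2 (by positivity)
            (by positivity)
      _ = (((n:ℝ) + (k:ℝ)) + 1) ^ k * s ^ (n+k) / Real.Gamma (β * ((n:ℝ)+(k:ℝ)) + 1) := by
          rw [div_eq_mul_inv]; ring
  calc ((n + k).factorial : ℝ) / (n.factorial : ℝ) * (Real.Gamma (β * ((n:ℝ)+(k:ℝ)) + 1))⁻¹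
        * (r:ℝ) ^ n
      ≤ (((n:ℝ) + (k:ℝ)) + 1) ^ k * s ^ (n+k) / Real.Gamma (β * ((n:ℝ)+(k:ℝ)) + 1) := goal
    _ = ((((n+k):ℕ):ℝ) + 1) ^ k * s ^ (n+k) / Real.Gamma (β * (((n+k):ℕ):ℝ) + 1) := by
        push_cast; ring_nf

lemma mlSeries_radius {β : ℝ} (hβ : 0 < β) (k : ℕ) : (mlSeries β k).radius = ⊤ := by
  apply FormalMultilinearSeries.radius_eq_top_of_summable_norm
  intro r
  have := summable_mlCoeff hβ k r
  simpa only [mlSeries, FormalMultilinearSeries.ofScalars_norm] using this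

lemma mlDeriv_hasFPS {β : ℝ} (hβ : 0 < β) (k : ℕ) :
    HasFPowerSeriesOnBall (mlDeriv β k) (mlSeries β k) 0 ⊤ := by
  have hrad := mlSeries_radius hβ k
  have h := (mlSeries β k).hasFPowerSeriesOnBall (by rw [hrad]; exact ENNReal.zero_lt_top)
  rw [hrad] at h
  have hsum : (mlSeries β k).sum = mlDeriv β k := by
    funext z
    rw [FormalMultilinearSeries.sum, mlDeriv]
    apply tsum_congr
    intro n
    rw [mlSeries, FormalMultilinearSeries.ofScalars_apply_eq, smul_eq_mul]
  rwa [hsum] at h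

lemma mlCoeff_succ {β : ℝ} (hβ : 0 < β) (k n : ℕ) :
    mlCoeff β (k + 1) n = ((n : ℂ) + 1) * mlCoeff β k (n + 1) := by
  have he : n + (k + 1) = (n + 1) + k := by omega
  rw [mlCoeff, mlCoeff, he]
  have hf : ((n+1).factorial : ℂ) = ((n:ℂ) + 1) * (n.factorial : ℂ) := by
    rw [Nat.factorial_succ]; push_cast; ring
  rw [hf]
  have h0 : (n.factorial : ℂ) ≠ 0 := by exact_mod_cast Nat.factorial_ne_zero n
  have h1 : ((n:ℂ) + 1) ≠ 0 := Nat.cast_add_one_ne_zero n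
  have hΓ : Complex.Gamma ((β * ((n+1) + k : ℕ) + 1 : ℝ) : ℂ) ≠ 0 := by
    rw [Complex.Gamma_ofReal]
    rw [Complex.ofReal_ne_zero]
    have hx : (0:ℝ) < β * (((n+1)+k : ℕ) : ℝ) + 1 := by
      have := mul_nonneg hβ.le (by positivity : (0:ℝ) ≤ (((n+1)+k : ℕ) : ℝ)); linarith
    exact (Real.Gamma_pos_of_pos hx).ne'
  have hg : ((β * ((n:ℝ) + ((k:ℝ)+1)) + 1 : ℝ) : ℂ) = ((β * (((n:ℝ)+1) + (k:ℝ)) + 1 : ℝ) : ℂ) := by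
    push_cast; ring_nf
  rw [show ((k:ℝ)+1 : ℝ) = (((k+1 : ℕ)):ℝ) by push_cast; ring] at hg
  rw [show (((n:ℝ)+1 : ℝ)) = (((n+1 : ℕ)):ℝ) by push_cast; ring] at hg
  have hΓ2 : Complex.Gamma ((β * (((n+1):ℕ) + (k:ℝ)) + 1 : ℝ) : ℂ) ≠ 0 := by
    convert hΓ using 3
    push_cast; ring
  rw [hg]
  set G := Complex.Gamma ((β * (((n+1):ℕ) + (k:ℝ)) + 1 : ℝ) : ℂ) with hG
  have hc : ((n:ℂ)+1) * ((n:ℂ)+1)⁻¹ = 1 := mul_inv_cancel₀ h1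
  rw [div_eq_mul_inv, div_eq_mul_inv, mul_inv]
  linear_combination (-((((n+1+k).factorial : ℕ) : ℂ) * ((n.factorial : ℂ))⁻¹ * G⁻¹)) * hc

lemma mlDeriv_deriv {β : ℝ} (hβ : 0 < β) (k : ℕ) (z : ℂ) :
    deriv (mlDeriv β k) z = mlDeriv β (k + 1) z := by
  have h := (mlDeriv_hasFPS hβ k).fderiv
  have h2 := h.hasSum (y := z) (by simp [EMetric.mem_ball])
  have h3 := (ContinuousLinearMap.apply ℂ ℂ (1 : ℂ)).hasSum h2
  simp only [ContinuousLinearMap.apply_apply, zero_add] at h3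
  rw [fderiv_apply_one_eq_deriv] at h3
  have hterm : ∀ n : ℕ, ((mlSeries β k).derivSeries n fun _ => z) 1 = mlCoeff β (k+1) n * z ^ n := by
    intro n
    have e1 : (fun _ : Fin n => z) = fun _ : Fin n => z • (1 : ℂ) := by simp
    rw [e1, ContinuousMultilinearMap.map_smul_univ]
    simp only [ContinuousLinearMap.smul_apply, Finset.prod_const, Finset.card_univ,
      Fintype.card_fin]
    rw [FormalMultilinearSeries.derivSeries_apply_diag]
    rw [mlSeries, FormalMultilinearSeries.ofScalars_apply_eq]
    rw [mlCoeff_succ hβ]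
    simp only [smul_eq_mul, one_pow, mul_one, nsmul_eq_mul]
    push_cast
    ring
  rw [funext hterm] at h3
  rw [mlDeriv]
  exact (h3.tsum_eq).symm

lemma iteratedDeriv_mittagLeffler {β : ℝ} (hβ : 0 < β) (k : ℕ) :
    iteratedDeriv k (mittagLeffler β) = mlDeriv β k := by
  induction k with
  | zero =>
    rw [iteratedDeriv_zero]
    funext z
    rw [mittagLeffler, mlDeriv]
    apply tsum_congr
    intro n
    have h0 : (n.factorial : ℂ) ≠ 0 := Nat.cast_ne_zero.mpr (Nat.factorial_ne_zero n)
    rw [mlCoeff]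
    simp only [Nat.add_zero, div_self h0, one_mul, div_eq_mul_inv]
    ring
  | succ k ih =>
    rw [iteratedDeriv_succ, ih]
    funext z
    exact mlDeriv_deriv hβ k z

lemma tsum_nat_prod_antidiagonal (t : ℕ × ℕ → ℂ) (ht : Summable t) :
    ∑' p : ℕ × ℕ, t p = ∑' m : ℕ, ∑ kl ∈ Finset.HasAntidiagonal.antidiagonal m, t kl := by
  rw [← Finset.HasAntidiagonal.sigmaAntidiagonalEquivProd.tsum_eq t]
  have h2 : Summable (fun c : (Σ n : ℕ, {x // x ∈ Finset.HasAntidiagonal.antidiagonal n}) =>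
      t (Finset.HasAntidiagonal.sigmaAntidiagonalEquivProd c)) :=
    Finset.HasAntidiagonal.sigmaAntidiagonalEquivProd.summable_iff.mpr ht
  rw [Summable.tsum_sigma h2]
  congr 1
  funext m
  rw [← Finset.sum_finset_coe, ← tsum_fintype (L := SummationFilter.unconditional _)]
  rfl

noncomputable def mlTerm (β lam : ℝ) (w : ℕ → ℂ) (p : ℕ × ℕ) : ℂ :=
  w p.1 * ((lam : ℂ) ^ p.1 / (p.1.factorial : ℂ)) * mlCoeff β p.1 p.2 * (-(lam : ℂ)) ^ p.2

lemma norm_mlTerm_le {β lam : ℝ} (hβ : 0 < β) (hlam : 0 < lam) (w : ℕ → ℂ)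
    (hw : ∀ k, ‖w k‖ ≤ ((k : ℝ) + 1) ^ 2) (p : ℕ × ℕ) :
    ‖mlTerm β lam w p‖ ≤ (((p.1 + p.2 : ℕ) : ℝ) + 1) ^ 2 * ((p.1 + p.2).choose p.1 : ℝ)
      * lam ^ (p.1 + p.2) * (Real.Gamma (β * ((p.1 + p.2 : ℕ) : ℝ) + 1))⁻¹ := by
  obtain ⟨k, n⟩ := p
  simp only [mlTerm]
  rw [norm_mul, norm_mul, norm_mul, norm_mlCoeff hβ, norm_div, norm_pow, norm_pow, norm_neg,
    Complex.norm_real, Complex.norm_natCast, Real.norm_eq_abs, abs_of_pos hlam]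
  have hΓ : 0 < Real.Gamma (β * ((n:ℝ) + (k:ℝ)) + 1) := Real.Gamma_pos_of_pos
    (by have := mul_nonneg hβ.le (by positivity : (0:ℝ) ≤ (n:ℝ) + (k:ℝ)); linarith)
  have hg : (β * ((k + n : ℕ) : ℝ) + 1) = (β * ((n:ℝ) + (k:ℝ)) + 1) := by push_cast; ring
  rw [hg]
  have hcomb : lam ^ k / (k.factorial : ℝ) * (((n + k).factorial : ℝ) / (n.factorial : ℝ))
      * lam ^ n = ((n + k).choose k : ℝ) * lam ^ (n + k) := by
    have hid : ((n + k).choose k : ℝ) * (n.factorial : ℝ) * (k.factorial : ℝ)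
        = ((n + k).factorial : ℝ) := by exact_mod_cast Nat.add_choose_mul_factorial_mul_factorial n k
    have h1 : (n.factorial : ℝ) ≠ 0 := by positivity
    have h2 : (k.factorial : ℝ) ≠ 0 := by positivity
    field_simp
    rw [← hid, pow_add]
    ring
  have hw' : ‖w k‖ ≤ (((k:ℝ) + (n:ℝ)) + 1) ^ 2 := by
    refine le_trans (hw k) (pow_le_pow_left₀ (by positivity) (by linarith [Nat.cast_nonneg (α := ℝ) n]) 2)
  calc ‖w k‖ * (lam ^ k / (k.factorial : ℝ))
        * (((n + k).factorial : ℝ) / (n.factorial : ℝ) * (Real.Gamma (β * ((n:ℝ)+(k:ℝ)) + 1))⁻¹)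
        * lam ^ n
      = ‖w k‖ * (lam ^ k / (k.factorial : ℝ) * (((n + k).factorial : ℝ) / (n.factorial : ℝ))
          * lam ^ n) * (Real.Gamma (β * ((n:ℝ)+(k:ℝ)) + 1))⁻¹ := by ring
    _ = ‖w k‖ * (((n + k).choose k : ℝ) * lam ^ (n + k))
          * (Real.Gamma (β * ((n:ℝ)+(k:ℝ)) + 1))⁻¹ := by rw [hcomb]
    _ ≤ (((k:ℝ) + (n:ℝ)) + 1) ^ 2 * (((n + k).choose k : ℝ) * lam ^ (n + k))
          * (Real.Gamma (β * ((n:ℝ)+(k:ℝ)) + 1))⁻¹ := by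
        apply mul_le_mul_of_nonneg_right _ (inv_nonneg.mpr hΓ.le)
        exact mul_le_mul_of_nonneg_right hw' (by positivity)
    _ = (((k + n : ℕ):ℝ) + 1) ^ 2 * ((k + n).choose k : ℝ) * lam ^ (k + n)
          * (Real.Gamma (β * ((n:ℝ)+(k:ℝ)) + 1))⁻¹ := by
        rw [Nat.add_comm n k]
        push_cast
        ring

lemma cancel_aux (Wk G L1 L2 C Nf Kf : ℂ) (hNf : Nf ≠ 0) (hKf : Kf ≠ 0) :
    Wk * (L1 / Kf) * ((C * Nf * Kf) / Nf * G) * L2 = G * (Wk * C * L1 * L2) := by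
  rw [div_eq_mul_inv, div_eq_mul_inv]
  calc Wk * (L1 * Kf⁻¹) * (C * Nf * Kf * Nf⁻¹ * G) * L2
      = (G * (Wk * C * L1 * L2)) * (Nf * Nf⁻¹) * (Kf * Kf⁻¹) := by ring
    _ = G * (Wk * C * L1 * L2) := by
        rw [mul_inv_cancel₀ hNf, mul_inv_cancel₀ hKf, mul_one, mul_one]

lemma summable_norm_mlTerm {β lam : ℝ} (hβ : 0 < β) (hlam : 0 < lam) (w : ℕ → ℂ)
    (hw : ∀ k, ‖w k‖ ≤ ((k : ℝ) + 1) ^ 2) :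
    Summable (fun p : ℕ × ℕ => ‖mlTerm β lam w p‖) := by
  rw [← Finset.HasAntidiagonal.sigmaAntidiagonalEquivProd.summable_iff]
  apply (summable_sigma_of_nonneg (fun _ => norm_nonneg _)).mpr
  constructor
  · intro m
    exact (hasSum_fintype _).summable
  · have hmaster := master_summable hβ 2 (r := 2 * lam) (by positivity)
    apply Summable.of_nonneg_of_le (fun m => tsum_nonneg (fun _ => norm_nonneg _)) _ hmaster
    intro m
    have hΓ : 0 < Real.Gamma (β * (m:ℝ) + 1) := Real.Gamma_pos_of_pos
      (by have := mul_nonneg hβ.le (Nat.cast_nonneg (α := ℝ) m); linarith)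
    rw [tsum_fintype]
    have hrw : ∀ c : {x // x ∈ Finset.HasAntidiagonal.antidiagonal m},
        ‖mlTerm β lam w (Finset.HasAntidiagonal.sigmaAntidiagonalEquivProd ⟨m, c⟩)‖ = ‖mlTerm β lam w c.1‖ := by
      intro c; rfl
    calc ∑ c : {x // x ∈ Finset.HasAntidiagonal.antidiagonal m},
          ‖mlTerm β lam w (Finset.HasAntidiagonal.sigmaAntidiagonalEquivProd ⟨m, c⟩)‖
        = ∑ kl ∈ Finset.HasAntidiagonal.antidiagonal m, ‖mlTerm β lam w kl‖ := by
          rw [← Finset.sum_finset_coe (f := fun kl => ‖mlTerm β lam w kl‖)]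
          exact Fintype.sum_congr _ _ hrw
      _ ≤ ∑ kl ∈ Finset.HasAntidiagonal.antidiagonal m,
            ((m:ℝ) + 1) ^ 2 * (m.choose kl.1 : ℝ) * lam ^ m * (Real.Gamma (β * (m:ℝ) + 1))⁻¹ := by
          apply Finset.sum_le_sum
          intro kl hkl
          have hm : kl.1 + kl.2 = m := Finset.HasAntidiagonal.mem_antidiagonal.mp hkl
          have := norm_mlTerm_le hβ hlam w hw kl
          rwa [hm] at this
      _ = ((m:ℝ) + 1) ^ 2 * lam ^ m * (Real.Gamma (β * (m:ℝ) + 1))⁻¹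
            * ∑ kl ∈ Finset.HasAntidiagonal.antidiagonal m, (m.choose kl.1 : ℝ) := by
          rw [Finset.mul_sum]
          apply Finset.sum_congr rfl
          intro kl _
          ring
      _ = ((m:ℝ) + 1) ^ 2 * (2 * lam) ^ m / Real.Gamma (β * (m:ℝ) + 1) := by
          have h2 : ∑ kl ∈ Finset.HasAntidiagonal.antidiagonal m, (m.choose kl.1 : ℝ) = (2:ℝ) ^ m := by
            rw [Finset.Nat.sum_antidiagonal_eq_sum_range_succ_mk]
            exact_mod_cast Nat.sum_range_choose m
          rw [h2, mul_pow, div_eq_mul_inv]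
          ring

lemma moment_eq {β lam : ℝ} (hβ : 0 < β) (hlam : 0 < lam) (w : ℕ → ℂ)
    (hw : ∀ k, ‖w k‖ ≤ ((k : ℝ) + 1) ^ 2) :
    ∑' k : ℕ, w k * ((lam : ℂ) ^ k / (k.factorial : ℂ)
        * iteratedDeriv k (mittagLeffler β) (-(lam : ℂ)))
      = ∑' m : ℕ, (Complex.Gamma ((β * m + 1 : ℝ) : ℂ))⁻¹ *
          ∑ kl ∈ Finset.HasAntidiagonal.antidiagonal m,
            w kl.1 * (m.choose kl.1 : ℂ) * (lam : ℂ) ^ kl.1 * (-(lam : ℂ)) ^ kl.2 := by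
  have hsum : Summable (mlTerm β lam w) := (summable_norm_mlTerm hβ hlam w hw).of_norm
  calc ∑' k : ℕ, w k * ((lam : ℂ) ^ k / (k.factorial : ℂ)
        * iteratedDeriv k (mittagLeffler β) (-(lam : ℂ)))
      = ∑' k : ℕ, ∑' n : ℕ, mlTerm β lam w (k, n) := by
        apply tsum_congr
        intro k
        rw [iteratedDeriv_mittagLeffler hβ]
        simp only [mlDeriv]
        rw [← tsum_mul_left, ← tsum_mul_left]
        apply tsum_congr
        intro n
        simp only [mlTerm]
        ring
    _ = ∑' p : ℕ × ℕ, mlTerm β lam w p := (Summable.tsum_prod hsum).symm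
    _ = ∑' m : ℕ, ∑ kl ∈ Finset.HasAntidiagonal.antidiagonal m, mlTerm β lam w kl :=
        tsum_nat_prod_antidiagonal _ hsum
    _ = ∑' m : ℕ, (Complex.Gamma ((β * m + 1 : ℝ) : ℂ))⁻¹ *
          ∑ kl ∈ Finset.HasAntidiagonal.antidiagonal m,
            w kl.1 * (m.choose kl.1 : ℂ) * (lam : ℂ) ^ kl.1 * (-(lam : ℂ)) ^ kl.2 := by
        apply tsum_congr
        intro m
        rw [Finset.mul_sum]
        apply Finset.sum_congr rfl
        intro kl hkl
        obtain ⟨k, n⟩ := kl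
        have hm : k + n = m := Finset.HasAntidiagonal.mem_antidiagonal.mp hkl
        simp only [mlTerm, mlCoeff]
        have hg : ((β * ((n:ℝ) + (k:ℝ)) + 1 : ℝ) : ℂ) = ((β * m + 1 : ℝ) : ℂ) := by
          rw [← hm]; push_cast; ring
        rw [hg]
        have hid : ((m.choose k : ℕ) : ℂ) * (n.factorial : ℂ) * (k.factorial : ℂ)
            = ((n + k).factorial : ℂ) := by
          rw [← hm, Nat.add_comm k n]
          exact_mod_cast Nat.add_choose_mul_factorial_mul_factorial n k
        have h1 : (n.factorial : ℂ) ≠ 0 := Nat.cast_ne_zero.mpr (Nat.factorial_ne_zero n)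
        have h2 : (k.factorial : ℂ) ≠ 0 := Nat.cast_ne_zero.mpr (Nat.factorial_ne_zero k)
        rw [← hid]
        exact cancel_aux _ _ _ _ _ _ _ h1 h2

lemma binom_zero_sum (x y : ℂ) (M : ℕ) :
    ∑ kl ∈ Finset.HasAntidiagonal.antidiagonal M, (M.choose kl.1 : ℂ) * x ^ kl.1 * y ^ kl.2 = (x + y) ^ M := by
  rw [Finset.Nat.sum_antidiagonal_eq_sum_range_succ_mk, add_pow]
  apply Finset.sum_congr rfl
  intro k _
  ring

lemma sumA (x : ℂ) (m : ℕ) :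
    ∑ kl ∈ Finset.HasAntidiagonal.antidiagonal m, (kl.1 : ℂ) * (m.choose kl.1 : ℂ) * x ^ kl.1 * (-x) ^ kl.2
      = if m = 1 then x else 0 := by
  cases m with
  | zero => simp
  | succ M =>
    rw [Finset.Nat.sum_antidiagonal_succ]
    have hterm : ∀ p : ℕ × ℕ,
        ((p.1 + 1 : ℕ) : ℂ) * ((M+1).choose (p.1 + 1) : ℂ) * x ^ (p.1 + 1) * (-x) ^ p.2
          = ((M : ℂ) + 1) * x * ((M.choose p.1 : ℂ) * x ^ p.1 * (-x) ^ p.2) := by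
      intro p
      have hc : ((M + 1) * M.choose p.1 : ℕ) = ((M+1).choose (p.1+1) * (p.1+1) : ℕ) :=
        Nat.add_one_mul_choose_eq M p.1
      have hc' : ((M:ℂ) + 1) * (M.choose p.1 : ℂ)
          = ((M+1).choose (p.1+1) : ℂ) * ((p.1:ℂ) + 1) := by exact_mod_cast hc
      push_cast
      linear_combination (-(x ^ p.1 * x * (-x) ^ p.2)) * hc'
    rw [Finset.sum_congr rfl (fun p _ => hterm p), ← Finset.mul_sum, binom_zero_sum x (-x) M]
    simp only [add_neg_cancel, Nat.cast_zero, zero_mul, zero_add]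
    cases M with
    | zero => simp
    | succ M' => simp [zero_pow]

lemma sumB (x : ℂ) (m : ℕ) :
    ∑ kl ∈ Finset.HasAntidiagonal.antidiagonal m, (kl.1 : ℂ) ^ 2 * (m.choose kl.1 : ℂ) * x ^ kl.1 * (-x) ^ kl.2
      = if m = 1 then x else if m = 2 then 2 * x ^ 2 else 0 := by
  cases m with
  | zero => simp
  | succ M =>
    rw [Finset.Nat.sum_antidiagonal_succ]
    have hterm : ∀ p : ℕ × ℕ,
        ((p.1 + 1 : ℕ) : ℂ) ^ 2 * ((M+1).choose (p.1 + 1) : ℂ) * x ^ (p.1 + 1) * (-x) ^ p.2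
          = ((M : ℂ) + 1) * x * ((p.1 : ℂ) * ((M.choose p.1 : ℂ) * x ^ p.1 * (-x) ^ p.2)
              + (M.choose p.1 : ℂ) * x ^ p.1 * (-x) ^ p.2) := by
      intro p
      have hc : ((M + 1) * M.choose p.1 : ℕ) = ((M+1).choose (p.1+1) * (p.1+1) : ℕ) :=
        Nat.add_one_mul_choose_eq M p.1
      have hc' : ((M:ℂ) + 1) * (M.choose p.1 : ℂ)
          = ((M+1).choose (p.1+1) : ℂ) * ((p.1:ℂ) + 1) := by exact_mod_cast hc
      push_cast
      linear_combination (-(x ^ p.1 * x * (-x) ^ p.2 * ((p.1:ℂ) + 1))) * hc'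
    rw [Finset.sum_congr rfl (fun p _ => hterm p), ← Finset.mul_sum]
    rw [Finset.sum_add_distrib]
    have hA : ∑ p ∈ Finset.HasAntidiagonal.antidiagonal M,
        (p.1 : ℂ) * ((M.choose p.1 : ℂ) * x ^ p.1 * (-x) ^ p.2)
        = if M = 1 then x else 0 := by
      rw [← sumA x M]
      apply Finset.sum_congr rfl
      intro p _
      ring
    rw [hA, binom_zero_sum x (-x) M]
    simp only [add_neg_cancel, Nat.cast_zero, zero_mul, zero_add, pow_zero]
    match M with
    | 0 => simp
    | 1 => norm_num; ring
    | (M'+2) => simp [zero_pow]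

/-- First and second moments of the fractional Poisson measure:
`m(1) = λ/Γ(β+1)` and `m(2) = λ/Γ(β+1) + 2λ²/Γ(2β+1)`. -/
theorem fracPoisson_first_two_moments (β lam : ℝ) (hβ : 0 < β) (hβ1 : β ≤ 1) (hlam : 0 < lam) :
    (∑' k : ℕ, (k : ℂ) *
        ((lam : ℂ) ^ k / ((k).factorial : ℂ) * iteratedDeriv k (mittagLeffler β) (-(lam : ℂ)))
      = (lam : ℂ) / Complex.Gamma ((β + 1 : ℝ) : ℂ)) ∧
    (∑' k : ℕ, (k : ℂ) ^ 2 *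
        ((lam : ℂ) ^ k / ((k).factorial : ℂ) * iteratedDeriv k (mittagLeffler β) (-(lam : ℂ)))
      = (lam : ℂ) / Complex.Gamma ((β + 1 : ℝ) : ℂ)
        + 2 * (lam : ℂ) ^ 2 / Complex.Gamma ((2 * β + 1 : ℝ) : ℂ)) := by
  have hw1 : ∀ k : ℕ, ‖((k : ℕ) : ℂ)‖ ≤ ((k : ℝ) + 1) ^ 2 := by
    intro k
    rw [Complex.norm_natCast]
    nlinarith [Nat.cast_nonneg (α := ℝ) k]
  have hw2 : ∀ k : ℕ, ‖((k : ℕ) : ℂ) ^ 2‖ ≤ ((k : ℝ) + 1) ^ 2 := by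
    intro k
    rw [norm_pow, Complex.norm_natCast]
    nlinarith [Nat.cast_nonneg (α := ℝ) k]
  have hg1 : ((β * ((1:ℕ):ℝ) + 1 : ℝ) : ℂ) = ((β + 1 : ℝ) : ℂ) := by push_cast; ring
  have hg2 : ((β * ((2:ℕ):ℝ) + 1 : ℝ) : ℂ) = ((2 * β + 1 : ℝ) : ℂ) := by push_cast; ring
  constructor
  · rw [moment_eq hβ hlam (fun k => ((k : ℕ) : ℂ)) hw1]
    have hcongr : ∀ m : ℕ, (Complex.Gamma ((β * m + 1 : ℝ) : ℂ))⁻¹ *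
        ∑ kl ∈ Finset.HasAntidiagonal.antidiagonal m,
          ((kl.1 : ℕ) : ℂ) * (m.choose kl.1 : ℂ) * (lam : ℂ) ^ kl.1 * (-(lam : ℂ)) ^ kl.2
        = (Complex.Gamma ((β * m + 1 : ℝ) : ℂ))⁻¹ * (if m = 1 then (lam : ℂ) else 0) := by
      intro m
      rw [sumA (lam : ℂ) m]
    rw [tsum_congr hcongr, tsum_eq_single 1 (by intro m hm; rw [if_neg hm, mul_zero])]
    rw [if_pos rfl, hg1, div_eq_mul_inv, mul_comm]
  · rw [moment_eq hβ hlam (fun k => ((k : ℕ) : ℂ) ^ 2) hw2]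
    have hcongr : ∀ m : ℕ, (Complex.Gamma ((β * m + 1 : ℝ) : ℂ))⁻¹ *
        ∑ kl ∈ Finset.HasAntidiagonal.antidiagonal m,
          ((kl.1 : ℕ) : ℂ) ^ 2 * (m.choose kl.1 : ℂ) * (lam : ℂ) ^ kl.1 * (-(lam : ℂ)) ^ kl.2
        = (Complex.Gamma ((β * m + 1 : ℝ) : ℂ))⁻¹ *
            (if m = 1 then (lam : ℂ) else if m = 2 then 2 * (lam : ℂ) ^ 2 else 0) := by
      intro m
      rw [sumB (lam : ℂ) m]
    rw [tsum_congr hcongr]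
    rw [tsum_eq_sum (s := ({1, 2} : Finset ℕ)) (by
      intro m hm
      have h1 : m ≠ 1 := by intro h; exact hm (by simp [h])
      have h2 : m ≠ 2 := by intro h; exact hm (by simp [h])
      rw [if_neg h1, if_neg h2, mul_zero])]
    rw [Finset.sum_pair (by norm_num : (1:ℕ) ≠ 2)]
    norm_num
    have hb : ((β:ℂ) * 2 + 1) = 2 * (β:ℂ) + 1 := by ring
    rw [hb, div_eq_mul_inv, div_eq_mul_inv]
    ring
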